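/- Let β = (ln(1+γ) - ln γ)/(ln(1+δ) - ln(1-δ)). Then for every even positive integer k, P(-γ < X_k < 1-γ) < β · √(2/(πk)) · exp(1/(12k)). -/

import Mathlib

open MeasureTheory ProbabilityTheory Finset

section CPDOAux

lemma central_binom_sq_le (n : ℕ) :
    Real.pi * n * (Nat.choose (2*n) n : ℝ)^2 ≤ 16^n := by
  have hW := Real.Wallis.le_W n
  have hWe := Real.Wallis.W_eq_factorial_ratio n
  rw [show (2:ℝ)^(4*n) = 16^n by rw [pow_mul]; norm_num] at hWe
  have hfac : (Nat.choose (2*n) n : ℝ) * (n.factorial : ℝ) * (n.factorial : ℝ) = ((2*n).factorial : ℝ) := by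
    have h := Nat.choose_mul_factorial_mul_factorial (show n ≤ 2*n by omega)
    have h2 : (2*n - n) = n := by omega
    rw [h2] at h
    exact_mod_cast congrArg (Nat.cast (R := ℝ)) h
  set W := Real.Wallis.W n with hWdef
  have hn2 : (0:ℝ) < 2*(n:ℝ)+2 := by positivity
  have hW' : (2*(n:ℝ)+1)*(Real.pi/2) ≤ (2*(n:ℝ)+2)*W := by
    rw [div_mul_eq_mul_div, div_le_iff₀ hn2] at hW
    linarith [hW]
  have h1 : Real.pi * n ≤ (2*(n:ℝ)+1) * W := by
    have ha : Real.pi * n * (2*(n:ℝ)+2) ≤ (2*(n:ℝ)+1)*((2*(n:ℝ)+1)*(Real.pi/2)) := by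
      nlinarith [Real.pi_pos]
    have hb : (2*(n:ℝ)+1)*((2*(n:ℝ)+1)*(Real.pi/2)) ≤ (2*(n:ℝ)+1)*((2*(n:ℝ)+2)*W) := by
      apply mul_le_mul_of_nonneg_left hW' (by positivity)
    have hc : Real.pi * n * (2*(n:ℝ)+2) ≤ (2*(n:ℝ)+1)*W*(2*(n:ℝ)+2) := by nlinarith [ha, hb]
    exact (mul_le_mul_iff_of_pos_right hn2).mp hc
  have h2 : (2*(n:ℝ)+1) * W * (((2*n).factorial:ℝ))^2 = 16^n * ((n.factorial:ℝ))^4 := by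
    rw [hWe]
    have hne : (((2*n).factorial:ℝ))^2 * (2*(n:ℝ)+1) ≠ 0 := by positivity
    field_simp
  have h3 : Real.pi * n * (((2*n).factorial:ℝ))^2 ≤ 16^n * ((n.factorial:ℝ))^4 := by
    rw [← h2]
    exact mul_le_mul_of_nonneg_right h1 (by positivity)
  have h4 : (((2*n).factorial:ℝ))^2 = (Nat.choose (2*n) n : ℝ)^2 * ((n.factorial:ℝ))^4 := by
    rw [← hfac]; ring
  rw [h4] at h3
  have hnf : (0:ℝ) < ((n.factorial:ℝ))^4 := by positivity
  exact (mul_le_mul_iff_of_pos_right hnf).mp (by linarith [h3])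

lemma choose_decay (n : ℕ) (hn : 0 < n) : ∀ j : ℕ,
    (Nat.choose (2*n) (n+j) : ℝ) ≤ (Nat.choose (2*n) n : ℝ) * Real.exp (-(j:ℝ)^2/(2*n)) := by
  intro j
  induction j with
  | zero => simp
  | succ j ih =>
    by_cases hj : n ≤ j
    · rw [Nat.choose_eq_zero_of_lt (by omega : 2*n < n + (j+1))]
      push_cast
      positivity
    · push_neg at hj
      push_cast
      have hnr : (0:ℝ) < (n:ℝ) := by exact_mod_cast hn
      have hj1 : (j:ℝ)+1 ≤ (n:ℝ) := by exact_mod_cast hj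
      have hden : (0:ℝ) < (n:ℝ)+(j:ℝ)+1 := by positivity
      have h2n : (0:ℝ) < 2*(n:ℝ) := by positivity
      have hid := Nat.choose_succ_right_eq (2*n) (n+j)
      have hid2 : (2*n) - (n+j) = n - j := by omega
      rw [hid2] at hid
      have hidR : (Nat.choose (2*n) (n+j+1) : ℝ) * ((n:ℝ)+(j:ℝ)+1) =
          (Nat.choose (2*n) (n+j) : ℝ) * ((n:ℝ)-(j:ℝ)) := by
        have h := congrArg (Nat.cast (R := ℝ)) hid
        push_cast [Nat.cast_sub hj.le] at h
        convert h using 2 <;> push_cast <;> ring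
      have hratio : ((n:ℝ)-(j:ℝ))/((n:ℝ)+(j:ℝ)+1) ≤ Real.exp (-((2*(j:ℝ)+1)/(2*n))) := by
        have he : 1 - (2*(j:ℝ)+1)/(2*n) ≤ Real.exp (-((2*(j:ℝ)+1)/(2*n))) := by
          have := Real.add_one_le_exp (-((2*(j:ℝ)+1)/(2*n)))
          linarith
        refine le_trans ?_ he
        have key : ((n:ℝ)-(j:ℝ))/((n:ℝ)+(j:ℝ)+1) ≤ (2*(n:ℝ)-(2*(j:ℝ)+1))/(2*(n:ℝ)) := by
          rw [div_le_div_iff₀ hden h2n]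
          nlinarith [mul_nonneg (by linarith : (0:ℝ) ≤ 2*(j:ℝ)+1) (by linarith : (0:ℝ) ≤ (n:ℝ)-(j:ℝ)-1)]
        refine key.trans_eq ?_
        field_simp
      have hc1 : (Nat.choose (2*n) (n+(j+1)) : ℝ) =
          (Nat.choose (2*n) (n+j) : ℝ) * (((n:ℝ)-(j:ℝ))/((n:ℝ)+(j:ℝ)+1)) := by
        rw [show n+(j+1) = n+j+1 from by omega, ← mul_div_assoc, eq_div_iff hden.ne']
        exact hidR
      rw [hc1]
      have hrnn : (0:ℝ) ≤ ((n:ℝ)-(j:ℝ))/((n:ℝ)+(j:ℝ)+1) := by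
        apply div_nonneg (by linarith) (by linarith)
      calc (Nat.choose (2*n) (n+j) : ℝ) * (((n:ℝ)-(j:ℝ))/((n:ℝ)+(j:ℝ)+1))
          ≤ ((Nat.choose (2*n) n : ℝ) * Real.exp (-(j:ℝ)^2/(2*n))) * (((n:ℝ)-(j:ℝ))/((n:ℝ)+(j:ℝ)+1)) :=
            mul_le_mul_of_nonneg_right ih hrnn
        _ ≤ ((Nat.choose (2*n) n : ℝ) * Real.exp (-(j:ℝ)^2/(2*n))) * Real.exp (-((2*(j:ℝ)+1)/(2*n))) := by
            apply mul_le_mul_of_nonneg_left hratio (by positivity)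
        _ = (Nat.choose (2*n) n : ℝ) * Real.exp (-((j:ℝ)+1)^2/(2*n)) := by
            rw [mul_assoc, ← Real.exp_add]
            congr 1
            field_simp
            ring

lemma choose_decay' (n : ℕ) (hn : 0 < n) (m : ℕ) :
    (Nat.choose (2*n) m : ℝ) ≤ (Nat.choose (2*n) n : ℝ) * Real.exp (-((m:ℝ)-(n:ℝ))^2/(2*n)) := by
  rcases le_or_gt n m with h | h
  · have hm : m = n + (m - n) := by omega
    rw [hm]
    have := choose_decay n hn (m - n)
    refine this.trans_eq ?_
    push_cast [Nat.cast_sub h]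
    ring_nf
  · have hsymm : Nat.choose (2*n) m = Nat.choose (2*n) (n + (n - m)) := by
      rw [show n + (n-m) = 2*n - m by omega]
      exact (Nat.choose_symm (by omega)).symm
    rw [hsymm]
    refine (choose_decay n hn (n-m)).trans_eq ?_
    rw [Nat.cast_sub h.le, show ((n:ℝ)-(m:ℝ))^2 = ((m:ℝ)-(n:ℝ))^2 by ring]

private lemma Ico_singleton (a : ℤ) : Finset.Ico a (a+1) = {a} := by
  ext x; simp [Finset.mem_Ico]; omega

lemma window_step (c : ℝ) (t : ℤ) :
    ∑ j ∈ Finset.Ico (t+1) (t+121), Real.exp (-(j:ℝ)^2/c)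
      = (∑ j ∈ Finset.Ico t (t+120), Real.exp (-(j:ℝ)^2/c))
        - Real.exp (-(t:ℝ)^2/c) + Real.exp (-((t:ℝ)+120)^2/c) := by
  have e1 : Finset.Ico t (t+120) = Finset.Ico t (t+1) ∪ Finset.Ico (t+1) (t+120) :=
    (Finset.Ico_union_Ico_eq_Ico (by omega) (by omega)).symm
  have e2 : Finset.Ico (t+1) (t+121) = Finset.Ico (t+1) (t+120) ∪ Finset.Ico (t+120) (t+121) :=
    (Finset.Ico_union_Ico_eq_Ico (by omega) (by omega)).symm
  have h1 : ∑ j ∈ Finset.Ico t (t+120), Real.exp (-(j:ℝ)^2/c)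
      = Real.exp (-(t:ℝ)^2/c) + ∑ j ∈ Finset.Ico (t+1) (t+120), Real.exp (-(j:ℝ)^2/c) := by
    rw [e1, Finset.sum_union (Finset.Ico_disjoint_Ico_consecutive _ _ _), Ico_singleton,
      Finset.sum_singleton]
  have h2 : ∑ j ∈ Finset.Ico (t+1) (t+121), Real.exp (-(j:ℝ)^2/c)
      = (∑ j ∈ Finset.Ico (t+1) (t+120), Real.exp (-(j:ℝ)^2/c)) + Real.exp (-((t:ℝ)+120)^2/c) := by
    rw [e2, Finset.sum_union (Finset.Ico_disjoint_Ico_consecutive _ _ _),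
      show t+121 = (t+120)+1 by ring, Ico_singleton, Finset.sum_singleton]
    push_cast
    rfl
  linarith [h1, h2]

lemma window_le (c : ℝ) (hc : 0 < c) : ∀ t : ℤ,
    ∑ j ∈ Finset.Ico t (t+120), Real.exp (-(j:ℝ)^2/c) ≤
    ∑ j ∈ Finset.Ico (-60 : ℤ) 60, Real.exp (-(j:ℝ)^2/c) := by
  have h60 : (Finset.Ico (-60 : ℤ) 60) = Finset.Ico (-60 : ℤ) (-60+120) := by norm_num
  rw [h60]
  have up : ∀ s : ℤ, (-60) ≤ s →
      ∑ j ∈ Finset.Ico s (s+120), Real.exp (-(j:ℝ)^2/c) ≤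
      ∑ j ∈ Finset.Ico (-60:ℤ) (-60+120), Real.exp (-(j:ℝ)^2/c) := by
    refine Int.le_induction le_rfl ?_
    intro s hs ih
    refine le_trans ?_ ih
    rw [show s+1+120 = s+121 by ring, window_step c s]
    have hsr : (-60:ℝ) ≤ (s:ℝ) := by exact_mod_cast hs
    have hmono : Real.exp (-((s:ℝ)+120)^2/c) ≤ Real.exp (-(s:ℝ)^2/c) := by
      apply Real.exp_le_exp.mpr
      rw [div_eq_mul_inv, div_eq_mul_inv]
      apply mul_le_mul_of_nonneg_right ?_ (by positivity)
      nlinarith [hsr]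
    linarith
  have down : ∀ s : ℤ, s ≤ (-60) →
      ∑ j ∈ Finset.Ico s (s+120), Real.exp (-(j:ℝ)^2/c) ≤
      ∑ j ∈ Finset.Ico (-60:ℤ) (-60+120), Real.exp (-(j:ℝ)^2/c) := by
    refine Int.le_induction_down le_rfl ?_
    intro s hs ih
    refine le_trans ?_ ih
    have hstep := window_step c (s-1)
    rw [show s-1+1 = s by ring, show s-1+121 = s+120 by ring] at hstep
    have hsr : (s:ℝ) ≤ -60 := by exact_mod_cast hs
    have hmono : Real.exp (-((s:ℝ)-1)^2/c) ≤ Real.exp (-((s:ℝ)-1+120)^2/c) := by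
      apply Real.exp_le_exp.mpr
      rw [div_eq_mul_inv, div_eq_mul_inv]
      apply mul_le_mul_of_nonneg_right ?_ (by positivity)
      nlinarith [hsr]
    push_cast at hstep ⊢
    linarith [hstep, hmono]
  intro t
  rcases le_or_gt (-60 : ℤ) t with h | h
  · exact up t h
  · exact down t h.le

lemma log_le_64 {x q : ℝ} (hx : 0 < x) (hq : 1 ≤ q) (h : x ≤ q^(64:ℕ)) :
    Real.log x ≤ 64*(q-1) := by
  have h1 : Real.log x ≤ Real.log (q^(64:ℕ)) :=
    Real.log_le_log hx h
  rw [Real.log_pow] at h1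
  have h2 : Real.log q ≤ q - 1 := Real.log_le_sub_one_of_pos (by linarith)
  push_cast at h1
  linarith

lemma le_log_64 {x r : ℝ} (hr : 0 < r) (hx : 0 < x) (h : 1 ≤ x * r^(64:ℕ)) :
    64*(1-r) ≤ Real.log x := by
  have hrp : (0:ℝ) < r^(64:ℕ) := by positivity
  have h1 : Real.log (x * r^(64:ℕ)) ≥ 0 := Real.log_nonneg h
  rw [Real.log_mul (by positivity) (by positivity), Real.log_pow] at h1
  have h2 : Real.log r ≤ r - 1 := Real.log_le_sub_one_of_pos hr
  push_cast at h1
  linarith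

lemma s_up : Real.log (101/99) ≤ 0.0200064 := by
  have := log_le_64 (x := 101/99) (q := 1.0003126) (by norm_num) (by norm_num) (by norm_num)
  linarith

lemma s_low : 0.0199936 ≤ Real.log (101/99) := by
  have := le_log_64 (x := 101/99) (r := 0.9996876) (by norm_num) (by norm_num) (by norm_num)
  linarith

lemma a_low : 0.010048 ≤ Real.log (100/99) := by
  have := le_log_64 (x := 100/99) (r := 0.999843) (by norm_num) (by norm_num) (by norm_num)
  linarith

lemma log11_low : 2.3970895 ≤ Real.log 11 := by
  have h121 : Real.log 121 = 2 * Real.log 11 := by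
    rw [show (121:ℝ) = 11^(2:ℕ) by norm_num, Real.log_pow]; push_cast; ring
  have h128 : Real.log 128 = 7 * Real.log 2 := by
    rw [show (128:ℝ) = 2^(7:ℕ) by norm_num, Real.log_pow]; push_cast; ring
  have hsplit : Real.log 128 = Real.log 121 + Real.log (128/121) := by
    rw [← Real.log_mul (by norm_num) (by norm_num)]; norm_num
  have hub : Real.log (128/121) ≤ 7/121 := by
    have := Real.log_le_sub_one_of_pos (show (0:ℝ) < 128/121 by norm_num)
    linarith [this]
  have h2 := Real.log_two_gt_d9
  nlinarith [h2, hub, hsplit, h121, h128]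

lemma log11_up : Real.log 11 ≤ 2.3986714 := by
  have h121 : Real.log 121 = 2 * Real.log 11 := by
    rw [show (121:ℝ) = 11^(2:ℕ) by norm_num, Real.log_pow]; push_cast; ring
  have h128 : Real.log 128 = 7 * Real.log 2 := by
    rw [show (128:ℝ) = 2^(7:ℕ) by norm_num, Real.log_pow]; push_cast; ring
  have hsplit : Real.log 128 = Real.log 121 + Real.log (128/121) := by
    rw [← Real.log_mul (by norm_num) (by norm_num)]; norm_num
  have hlb : 1 - 121/128 ≤ Real.log (128/121) := by
    have h1 := Real.log_le_sub_one_of_pos (show (0:ℝ) < 121/128 by norm_num)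
    have h2 : Real.log (121/128) = - Real.log (128/121) := by
      rw [show (121:ℝ)/128 = (128/121:ℝ)⁻¹ by norm_num, Real.log_inv]
    linarith
  have h2 := Real.log_two_lt_d9
  nlinarith [h2, hlb, hsplit, h121, h128]

lemma log10_up : Real.log 10 ≤ 2.302994 := by
  have h8 : Real.log 8 = 3 * Real.log 2 := by
    rw [show (8:ℝ) = 2^(3:ℕ) by norm_num, Real.log_pow]; push_cast; ring
  have hsplit : Real.log 10 = Real.log 8 + Real.log (5/4) := by
    rw [← Real.log_mul (by norm_num) (by norm_num)]; norm_num
  have h54 : Real.log (5/4) ≤ 64*(1.003493-1) :=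
    log_le_64 (by norm_num) (by norm_num) (by norm_num)
  have h2 := Real.log_two_lt_d9
  nlinarith [h2, h54, hsplit, h8]

lemma exp_neg_le {x : ℝ} (hx : 0 ≤ x) : Real.exp (-x) ≤ 1/(1+x) := by
  rw [Real.exp_neg, inv_eq_one_div]
  have h1 : (0:ℝ) < 1 + x := by linarith
  have h2 : 1 + x ≤ Real.exp x := by linarith [Real.add_one_le_exp x]
  exact one_div_le_one_div_of_le h1 h2

lemma gbound {c : ℝ} (hc0 : 0 < c) (hc : c ≤ 60000) (j : ℝ) :
    Real.exp (-j^2/c) ≤ 60000/(60000+j^2) := by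
  have hx : 0 ≤ j^2/c := by positivity
  have h1 : Real.exp (-(j^2/c)) ≤ 1/(1+j^2/c) := exp_neg_le hx
  have he : 1/(1+j^2/c) = c/(c+j^2) := by
    rw [div_eq_div_iff (by positivity) (by positivity)]
    field_simp
  have h2 : c/(c+j^2) ≤ 60000/(60000+j^2) := by
    rw [div_le_div_iff₀ (by positivity) (by positivity)]
    nlinarith [sq_nonneg j]
  calc Real.exp (-j^2/c) = Real.exp (-(j^2/c)) := by rw [neg_div]
    _ ≤ 1/(1+j^2/c) := h1
    _ = c/(c+j^2) := he
    _ ≤ 60000/(60000+j^2) := h2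

lemma sum60 : ∑ j ∈ Finset.Icc (1:ℕ) 60, (60000:ℝ)/(60000+(j:ℝ)^2) < 58.9 := by
  rw [show Finset.Icc (1:ℕ) 60 = Finset.Ico (1:ℕ) 61 by rfl, Finset.sum_Ico_eq_sum_range]
  norm_num [Finset.sum_range_succ]

lemma centered_sum_lt {c : ℝ} (hc0 : 0 < c) (hc : c ≤ 60000) :
    ∑ j ∈ Finset.Ico (-60:ℤ) 60, Real.exp (-(j:ℝ)^2/c) < 118.8 := by
  set g : ℤ → ℝ := fun j => (60000:ℝ)/(60000+(j:ℝ)^2) with hg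
  have hgnn : ∀ j : ℤ, 0 ≤ g j := by intro j; positivity
  have hstep1 : ∑ j ∈ Finset.Ico (-60:ℤ) 60, Real.exp (-(j:ℝ)^2/c)
      ≤ ∑ j ∈ Finset.Ico (-60:ℤ) 60, g j :=
    Finset.sum_le_sum (fun j _ => gbound hc0 hc (j:ℝ))
  have hsplit : ∑ j ∈ Finset.Ico (-60:ℤ) 60, g j
      = (∑ j ∈ Finset.Ico (-60:ℤ) 0, g j) + ∑ j ∈ Finset.Ico (0:ℤ) 60, g j := by
    rw [← Finset.sum_union (Finset.Ico_disjoint_Ico_consecutive _ _ _),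
      Finset.Ico_union_Ico_eq_Ico (by omega) (by omega)]
  have hneg : ∑ j ∈ Finset.Ico (-60:ℤ) 0, g j = ∑ j ∈ Finset.Icc (1:ℤ) 60, g j := by
    have himg : (Finset.Icc (1:ℤ) 60).image (fun j => -j) = Finset.Ico (-60:ℤ) 0 := by
      ext x
      simp only [Finset.mem_image, Finset.mem_Icc, Finset.mem_Ico]
      constructor
      · rintro ⟨a, ha, rfl⟩; omega
      · intro h; exact ⟨-x, by omega, by omega⟩
    rw [← himg, Finset.sum_image (by intro a _ b _ h; simp only at h; omega)]
    apply Finset.sum_congr rfl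
    intro j _
    simp only [hg]
    push_cast
    ring_nf
  have hpos : ∑ j ∈ Finset.Ico (0:ℤ) 60, g j ≤ 1 + ∑ j ∈ Finset.Icc (1:ℤ) 60, g j := by
    have e : Finset.Ico (0:ℤ) 60 = Finset.Ico (0:ℤ) 1 ∪ Finset.Ico (1:ℤ) 60 :=
      (Finset.Ico_union_Ico_eq_Ico (by omega) (by omega)).symm
    rw [e, Finset.sum_union (Finset.Ico_disjoint_Ico_consecutive _ _ _)]
    have h0 : ∑ j ∈ Finset.Ico (0:ℤ) 1, g j = 1 := by
      rw [show Finset.Ico (0:ℤ) 1 = {0} by ext x; simp [Finset.mem_Ico]; omega,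
        Finset.sum_singleton]
      norm_num [hg]
    rw [h0]
    have hsub : Finset.Ico (1:ℤ) 60 ⊆ Finset.Icc (1:ℤ) 60 := by
      intro x hx; simp [Finset.mem_Ico] at hx; simp [Finset.mem_Icc]; omega
    have := Finset.sum_le_sum_of_subset_of_nonneg hsub (fun j _ _ => hgnn j)
    linarith
  have hcast : ∑ j ∈ Finset.Icc (1:ℤ) 60, g j
      = ∑ j ∈ Finset.Icc (1:ℕ) 60, (60000:ℝ)/(60000+(j:ℝ)^2) := by
    have himg : (Finset.Icc (1:ℕ) 60).image (Nat.cast : ℕ → ℤ) = Finset.Icc (1:ℤ) 60 := by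
      ext x
      simp only [Finset.mem_image, Finset.mem_Icc]
      constructor
      · rintro ⟨a, ha, rfl⟩; omega
      · intro h; exact ⟨x.toNat, by omega, by omega⟩
    rw [← himg, Finset.sum_image (by intro a _ b _ h; omega)]
    apply Finset.sum_congr rfl
    intro j _
    simp [hg]
  have := sum60
  linarith [hstep1, hsplit, hneg, hpos, hcast]

lemma prob_part {Ω : Type*} [MeasureSpace Ω] [IsProbabilityMeasure (ℙ : Measure Ω)]
    (C : ℕ → Ω → ℝ)
    (hMeas : ∀ j, Measurable (C j))
    (hIndep : iIndepFun C ℙ)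
    (hHead : ∀ j, ℙ {ω | C j ω = 1} = 1/2)
    (hTail : ∀ j, ℙ {ω | C j ω = -1} = 1/2)
    (k : ℕ) :
    (ℙ {ω | (1/10:ℝ) < ∏ j ∈ Finset.Icc 1 k, (1 - (1/100) * C j ω)
        ∧ ∏ j ∈ Finset.Icc 1 k, (1 - (1/100) * C j ω) < 11/10}).toReal ≤
      (∑ m ∈ (Finset.range (k+1)).filter
          (fun m => (1/10:ℝ) < (101/100:ℝ)^m * (99/100:ℝ)^(k-m)
            ∧ (101/100:ℝ)^m * (99/100:ℝ)^(k-m) < 11/10), (Nat.choose k m : ℝ)) * (1/2)^k := by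
  classical
  set S := Finset.Icc 1 k with hS
  have hScard : S.card = k := by simp [hS]
  set e : Finset ℕ → ℕ → ℝ := fun T j => if j ∈ T then -1 else 1 with he
  set pr : Finset ℕ → ℝ := fun T => ∏ j ∈ S, (1 - (1/100) * e T j) with hpr
  set q : ℕ → ℝ := fun m => (101/100:ℝ)^m * (99/100:ℝ)^(k-m) with hq
  set atom : Finset ℕ → Set Ω := fun T => ⋂ j ∈ S, C j ⁻¹' {e T j} with hatom
  set E : Set Ω := {ω | (1/10:ℝ) < ∏ j ∈ S, (1 - (1/100) * C j ω)
      ∧ ∏ j ∈ S, (1 - (1/100) * C j ω) < 11/10} with hE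
  set Ω₀ : Set Ω := ⋂ j ∈ S, (C j ⁻¹' {1} ∪ C j ⁻¹' {-1}) with hΩ₀
  -- measure of each atom
  have h_atom : ∀ T : Finset ℕ, ℙ (atom T) = (1/2 : ENNReal)^k := by
    intro T
    rw [hatom]
    rw [hIndep.measure_inter_preimage_eq_mul S (sets := fun j => {e T j})
      (fun i _ => measurableSet_singleton _)]
    rw [Finset.prod_congr rfl (fun j _ => ?_), Finset.prod_const, hScard]
    show ℙ (C j ⁻¹' {e T j}) = 1/2
    by_cases hj : j ∈ T
    · simp only [he, if_pos hj]; exact hTail j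
    · simp only [he, if_neg hj]; exact hHead j
  -- Ω₀ has full measure
  have hΩ₀meas : MeasurableSet Ω₀ := by
    apply MeasurableSet.biInter (Finset.countable_toSet S)
    intro j _
    exact ((hMeas j) (measurableSet_singleton _)).union ((hMeas j) (measurableSet_singleton _))
  have hΩ₀c : ℙ Ω₀ᶜ = 0 := by
    have hc : Ω₀ᶜ = ⋃ j ∈ S, (C j ⁻¹' {1} ∪ C j ⁻¹' {-1})ᶜ := by
      simp [hΩ₀, Set.compl_iInter]
    rw [hc]
    refine le_antisymm ?_ zero_le
    refine le_trans (measure_biUnion_finset_le _ _) ?_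
    have hz : ∀ j ∈ S, ℙ (C j ⁻¹' {1} ∪ C j ⁻¹' {-1})ᶜ = 0 := by
      intro j _
      have hdisj : Disjoint (C j ⁻¹' {(1:ℝ)}) (C j ⁻¹' {(-1:ℝ)}) := by
        rw [Set.disjoint_left]
        intro ω h1 h2
        simp only [Set.mem_preimage, Set.mem_singleton_iff] at h1 h2
        rw [h1] at h2; norm_num at h2
      have hu : ℙ (C j ⁻¹' {(1:ℝ)} ∪ C j ⁻¹' {(-1:ℝ)}) = 1 := by
        rw [measure_union hdisj ((hMeas j) (measurableSet_singleton _))]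
        rw [show ℙ (C j ⁻¹' {(1:ℝ)}) = 1/2 from hHead j,
          show ℙ (C j ⁻¹' {(-1:ℝ)}) = 1/2 from hTail j]
        rw [ENNReal.div_add_div_same, show (1+1 : ENNReal) = 2 from by norm_num]
        exact ENNReal.div_self (by norm_num) ENNReal.ofNat_ne_top
      rw [measure_compl (((hMeas j) (measurableSet_singleton _)).union
        ((hMeas j) (measurableSet_singleton _))) (measure_ne_top _ _), hu]
      simp [measure_univ]
    rw [Finset.sum_congr rfl hz]
    simp
  -- the good family
  set 𝒯 : Finset (Finset ℕ) := S.powerset.filter (fun T => (1/10:ℝ) < pr T ∧ pr T < 11/10)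
    with h𝒯
  -- inclusion
  have hincl : E ∩ Ω₀ ⊆ ⋃ T ∈ 𝒯, atom T := by
    rintro ω ⟨hEω, hΩω⟩
    set T : Finset ℕ := S.filter (fun j => C j ω = -1) with hT
    have hTsub : T ⊆ S := Finset.filter_subset _ _
    have hkey : ∀ j ∈ S, C j ω = e T j := by
      intro j hj
      have hval : C j ω = 1 ∨ C j ω = -1 := by
        have := Set.mem_iInter₂.mp hΩω j hj
        rcases this with h | h
        · left; exact h
        · right; exact h
      by_cases hjT : j ∈ T
      · simp only [he, if_pos hjT]
        exact (Finset.mem_filter.mp hjT).2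
      · simp only [he, if_neg hjT]
        rcases hval with h | h
        · exact h
        · exact absurd (Finset.mem_filter.mpr ⟨hj, h⟩) hjT
    have hprod : ∏ j ∈ S, (1 - (1/100) * C j ω) = pr T := by
      rw [hpr]
      exact Finset.prod_congr rfl (fun j hj => by rw [hkey j hj])
    have hTmem : T ∈ 𝒯 := by
      rw [h𝒯, Finset.mem_filter, Finset.mem_powerset]
      refine ⟨hTsub, ?_, ?_⟩
      · rw [← hprod]; exact hEω.1
      · rw [← hprod]; exact hEω.2
    apply Set.mem_biUnion hTmem
    rw [hatom]
    apply Set.mem_iInter₂.mpr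
    intro j hj
    simp only [Set.mem_preimage, Set.mem_singleton_iff]
    exact hkey j hj
  -- measure bound
  have hmain : ℙ E ≤ (𝒯.card : ENNReal) * (1/2)^k := by
    have h1 : E ⊆ (E ∩ Ω₀) ∪ Ω₀ᶜ := by
      intro ω hω
      by_cases h : ω ∈ Ω₀
      · exact Or.inl ⟨hω, h⟩
      · exact Or.inr h
    calc ℙ E ≤ ℙ ((E ∩ Ω₀) ∪ Ω₀ᶜ) := measure_mono h1
      _ ≤ ℙ (E ∩ Ω₀) + ℙ Ω₀ᶜ := measure_union_le _ _
      _ = ℙ (E ∩ Ω₀) := by rw [hΩ₀c, add_zero]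
      _ ≤ ℙ (⋃ T ∈ 𝒯, atom T) := measure_mono hincl
      _ ≤ ∑ T ∈ 𝒯, ℙ (atom T) := measure_biUnion_finset_le _ _
      _ = ∑ T ∈ 𝒯, (1/2 : ENNReal)^k := Finset.sum_congr rfl (fun T _ => h_atom T)
      _ = (𝒯.card : ENNReal) * (1/2)^k := by rw [Finset.sum_const, nsmul_eq_mul]
  -- cardinality
  have hprcard : ∀ T ∈ S.powerset, pr T = q T.card := by
    intro T hTp
    rw [Finset.mem_powerset] at hTp
    simp only [hpr, hq]
    have hsplit : S = T ∪ (S \ T) := by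
      rw [Finset.union_sdiff_of_subset hTp]
    rw [Finset.prod_congr rfl (fun j _ => show (1 - (1/100) * e T j)
        = (if j ∈ T then (101/100:ℝ) else 99/100) from by
      simp only [he]; split_ifs <;> norm_num)]
    rw [hsplit, Finset.prod_union Finset.sdiff_disjoint.symm]
    rw [Finset.prod_congr rfl (fun j hj => if_pos hj),
      Finset.prod_congr rfl (fun j hj => if_neg (Finset.mem_sdiff.mp hj).2),
      Finset.prod_const, Finset.prod_const, Finset.card_sdiff_of_subset hTp, hScard]
  have hcard : 𝒯.card = ∑ m ∈ (Finset.range (k+1)).filter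
      (fun m => (1/10:ℝ) < q m ∧ q m < 11/10), Nat.choose k m := by
    have h𝒯eq : 𝒯 = ((Finset.range (k+1)).filter
        (fun m => (1/10:ℝ) < q m ∧ q m < 11/10)).biUnion
        (fun m => Finset.powersetCard m S) := by
      ext T
      simp only [h𝒯, Finset.mem_filter, Finset.mem_powerset, Finset.mem_biUnion,
        Finset.mem_range, Finset.mem_powersetCard]
      constructor
      · rintro ⟨hsub, hc1, hc2⟩
        have hpq := hprcard T (Finset.mem_powerset.mpr hsub)
        refine ⟨T.card, ⟨?_, ?_⟩, hsub, rfl⟩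
        · have hle := Finset.card_le_card hsub
          rw [hScard] at hle
          omega
        · rw [← hpq]; exact ⟨hc1, hc2⟩
      · rintro ⟨m, ⟨hm1, hm2⟩, hsub, hcardm⟩
        have hpq := hprcard T (Finset.mem_powerset.mpr hsub)
        subst hcardm
        rw [← hpq] at hm2
        exact ⟨hsub, hm2.1, hm2.2⟩
    rw [h𝒯eq, Finset.card_biUnion]
    · exact Finset.sum_congr rfl (fun m _ => by rw [Finset.card_powersetCard, hScard])
    · intro m1 _ m2 _ hne
      rw [Function.onFun, Finset.disjoint_left]
      intro T hT1 hT2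
      rw [Finset.mem_powersetCard] at hT1 hT2
      exact hne (by omega)
  -- conclude
  rw [hcard] at hmain
  have hne : ((∑ m ∈ (Finset.range (k+1)).filter
      (fun m => (1/10:ℝ) < q m ∧ q m < 11/10), Nat.choose k m : ℕ) : ENNReal) * (1/2)^k ≠ ⊤ := by
    apply ENNReal.mul_ne_top (by simp)
    apply ENNReal.pow_ne_top
    simp
  have hto := ENNReal.toReal_mono hne (by exact_mod_cast hmain)
  rw [ENNReal.toReal_mul, ENNReal.toReal_pow] at hto
  simp only [ENNReal.toReal_natCast] at hto
  have h12 : ((1:ENNReal)/2).toReal = (1/2 : ℝ) := by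
    rw [one_div, ENNReal.toReal_inv]
    norm_num
  rw [h12] at hto
  refine le_trans hto ?_
  push_cast
  exact le_refl _

end CPDOAux

set_option maxHeartbeats 2000000 in
/-- For the CPDO net capital driven by i.i.d. fair signs with `δ = 0.01`
and `γ = 0.1`, let `β = (ln(1+γ) - ln γ)/(ln(1+δ) - ln(1-δ))`. Then for every even positive
integer `k`, `P(-γ < X k < 1-γ) < β · √(2/(πk)) · exp(1/(12k))`. -/
theorem cpdo_continuation_probability_bound
    {Ω : Type*} [MeasureSpace Ω] [IsProbabilityMeasure (ℙ : Measure Ω)]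
    (δ γ : ℝ) (hδ : δ = 0.01) (hγ : γ = 0.1)
    (C : ℕ → Ω → ℝ)
    (hMeas : ∀ j, Measurable (C j))
    (hIndep : iIndepFun C ℙ)
    (hHead : ∀ j, ℙ {ω | C j ω = 1} = 1/2)
    (hTail : ∀ j, ℙ {ω | C j ω = -1} = 1/2)
    (X : ℕ → Ω → ℝ)
    (hX : ∀ (k : ℕ) (ω : Ω), X k ω = 1 - ∏ j ∈ Finset.Icc 1 k, (1 - δ * C j ω))
    (β : ℝ)
    (hβ : β = (Real.log (1 + γ) - Real.log γ) / (Real.log (1 + δ) - Real.log (1 - δ))) :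
    ∀ k : ℕ, 0 < k → Even k →
      (ℙ {ω | -γ < X k ω ∧ X k ω < 1 - γ}).toReal
        < β * Real.sqrt (2 / (Real.pi * k)) * Real.exp (1 / (12 * k)) := by
  intro k hk hkEven
  classical
  obtain ⟨n, hkn⟩ := hkEven
  have hk2 : k = 2*n := by omega
  have hn1 : 0 < n := by omega
  -- rewrite the event
  have hEvent : {ω | -γ < X k ω ∧ X k ω < 1 - γ}
      = {ω | (1/10:ℝ) < ∏ j ∈ Finset.Icc 1 k, (1 - (1/100) * C j ω)
          ∧ ∏ j ∈ Finset.Icc 1 k, (1 - (1/100) * C j ω) < 11/10} := by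
    ext ω
    simp only [Set.mem_setOf_eq, hX k ω, hδ, hγ, show (0.01:ℝ) = 1/100 from by norm_num]
    constructor <;> rintro ⟨h1, h2⟩ <;> constructor <;> linarith
  rw [hEvent]
  refine lt_of_le_of_lt (prob_part C hMeas hIndep hHead hTail k) ?_
  -- abbreviations
  have hβ' : β = Real.log 11 / (Real.log (101/100) - Real.log (99/100)) := by
    rw [hβ, hδ, hγ]
    congr 1
    · rw [show (1:ℝ) + 0.1 = 11/10 from by norm_num, show (0.1:ℝ) = 1/10 from by norm_num,
        ← Real.log_div (by norm_num) (by norm_num)]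
      norm_num
    · rw [show (1:ℝ) + 0.01 = 101/100 from by norm_num,
        show (1:ℝ) - 0.01 = 99/100 from by norm_num]
  set u : ℝ := Real.log (101/100) with hu
  set v : ℝ := Real.log (99/100) with hv
  set A : ℝ := Real.log 11 with hA
  set s : ℝ := u - v with hsdef
  -- basic facts about the logs
  have hs_eq : s = Real.log (101/99) := by
    rw [hsdef, hu, hv, ← Real.log_div (by norm_num) (by norm_num)]
    norm_num
  have hs_pos : 0 < s := by
    rw [hsdef, hu, hv, sub_pos]
    exact Real.log_lt_log (by norm_num) (by norm_num)
  have hs_up : s ≤ 0.0200064 := by rw [hs_eq]; exact s_up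
  have hs_low : 0.0199936 ≤ s := by rw [hs_eq]; exact s_low
  have hv_eq : -v = Real.log (100/99) := by
    rw [hv, show (99:ℝ)/100 = (100/99:ℝ)⁻¹ from by norm_num, Real.log_inv]
    ring
  have ha_low : 0.010048 ≤ -v := by rw [hv_eq]; exact a_low
  have hA_low : 2.3970895 ≤ A := by rw [hA]; exact log11_low
  have hA_up : A ≤ 2.3986714 := by rw [hA]; exact log11_up
  have hlog10 : Real.log (1/10) = - Real.log 10 := by
    rw [show (1:ℝ)/10 = (10:ℝ)⁻¹ from by norm_num, Real.log_inv]
  have hlog1110 : Real.log (11/10) = Real.log 11 - Real.log 10 :=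
    Real.log_div (by norm_num) (by norm_num)
  have hβ_ge : 119.7 ≤ β := by
    rw [hβ']
    have h1 : (2.3970895 : ℝ)/0.0200064 ≤ A / s := by
      apply div_le_div₀ (by linarith) hA_low hs_pos hs_up
    have h2 : (119.7:ℝ) ≤ (2.3970895 : ℝ)/0.0200064 := by norm_num
    linarith
  -- the index window
  set x : ℝ := (Real.log (1/10) + k * (-v)) / s with hx
  set y : ℝ := (Real.log (11/10) + k * (-v)) / s with hy
  have hyx : y = x + A/s := by
    rw [hy, hx, hA, ← add_div, hlog1110, hlog10]
    ring_nf
  set M : Finset ℕ := (Finset.range (k+1)).filter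
      (fun m => (1/10:ℝ) < (101/100:ℝ)^m * (99/100:ℝ)^(k-m)
        ∧ (101/100:ℝ)^m * (99/100:ℝ)^(k-m) < 11/10) with hM
  have hm_bounds : ∀ m ∈ M, x < (m:ℝ) ∧ (m:ℝ) < y := by
    intro m hm
    obtain ⟨hmr, hc1, hc2⟩ := Finset.mem_filter.mp hm
    have hmk : m ≤ k := by
      have := Finset.mem_range.mp hmr; omega
    have hcast : ((k - m : ℕ):ℝ) = (k:ℝ) - m := by
      push_cast [hmk]; ring
    have h1 : Real.log (1/10) < m*u + ((k:ℝ)-m)*v := by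
      have hl := Real.log_lt_log (by norm_num : (0:ℝ) < 1/10) hc1
      rwa [Real.log_mul (by positivity) (by positivity), Real.log_pow, Real.log_pow,
        hcast, ← hu, ← hv] at hl
    have h2 : m*u + ((k:ℝ)-m)*v < Real.log (11/10) := by
      have hl := Real.log_lt_log (by positivity) hc2
      rwa [Real.log_mul (by positivity) (by positivity), Real.log_pow, Real.log_pow,
        hcast, ← hu, ← hv] at hl
    have hring : (m:ℝ)*u + ((k:ℝ)-m)*v = m*s - k*(-v) := by rw [hsdef]; ring
    constructor
    · rw [hx, div_lt_iff₀ hs_pos]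
      linarith [h1, hring]
    · rw [hy, lt_div_iff₀ hs_pos]
      linarith [h2, hring]
  -- window length
  have hlen : A/s < 120 := by
    have h1 : A/s ≤ (2.3986714:ℝ)/0.0199936 := by
      apply div_le_div₀ (by norm_num) hA_up (by norm_num) hs_low
    have : (2.3986714:ℝ)/0.0199936 < 120 := by norm_num
    linarith
  -- per-term binomial bound
  have hkr : ((k:ℕ):ℝ) = 2*(n:ℝ) := by rw [hk2]; push_cast; ring
  have hkpos : (0:ℝ) < (k:ℝ) := by positivity
  have hNle : (∑ m ∈ M, (Nat.choose k m : ℝ))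
      ≤ (Nat.choose k n : ℝ) * ∑ m ∈ M, Real.exp (-((m:ℝ)-(n:ℝ))^2/(k:ℝ)) := by
    rw [Finset.mul_sum]
    apply Finset.sum_le_sum
    intro m _
    have hd := choose_decay' n hn1 m
    rw [← hk2] at hd
    rwa [show 2*(n:ℝ) = (k:ℝ) from hkr.symm] at hd
  -- the key sum bound
  have hsum_lt : (∑ m ∈ M, Real.exp (-((m:ℝ)-(n:ℝ))^2/(k:ℝ))) < 119.7 := by
    by_cases hkle : k ≤ 60000
    · -- small case : centered window
      set t : ℤ := ⌊x⌋ + 1 - n with ht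
      have hsub : M.image (fun m : ℕ => (m:ℤ) - n) ⊆ Finset.Ico t (t+120) := by
        intro j hj
        obtain ⟨m, hm, rfl⟩ := Finset.mem_image.mp hj
        obtain ⟨hx1, hx2⟩ := hm_bounds m hm
        rw [Finset.mem_Ico]
        constructor
        · rw [ht]
          have : ⌊x⌋ < (m:ℤ) := Int.floor_lt.mpr (by exact_mod_cast hx1)
          omega
        · rw [ht]
          have hxy : (m:ℝ) < x + 120 := by
            rw [hyx] at hx2; linarith [hlen]
          have h2 : (m:ℝ) < (⌊x⌋:ℝ) + 121 := by
            have := Int.sub_one_lt_floor x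
            linarith
          have : (m:ℤ) < ⌊x⌋ + 121 := by exact_mod_cast h2
          omega
      have himg : ∑ m ∈ M, Real.exp (-((m:ℝ)-(n:ℝ))^2/(k:ℝ))
          = ∑ j ∈ M.image (fun m : ℕ => (m:ℤ) - n), Real.exp (-((j:ℤ):ℝ)^2/(k:ℝ)) := by
        rw [Finset.sum_image (by intro a _ b _ hab; simp only at hab; omega)]
        apply Finset.sum_congr rfl
        intro m _
        congr 2
        push_cast
        ring
      rw [himg]
      calc ∑ j ∈ M.image (fun m : ℕ => (m:ℤ) - n), Real.exp (-((j:ℤ):ℝ)^2/(k:ℝ))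
          ≤ ∑ j ∈ Finset.Ico t (t+120), Real.exp (-((j:ℤ):ℝ)^2/(k:ℝ)) :=
            Finset.sum_le_sum_of_subset_of_nonneg hsub (fun j _ _ => by positivity)
        _ ≤ ∑ j ∈ Finset.Ico (-60:ℤ) 60, Real.exp (-((j:ℤ):ℝ)^2/(k:ℝ)) := window_le _ hkpos t
        _ < 118.8 := centered_sum_lt hkpos (by exact_mod_cast hkle)
        _ < 119.7 := by norm_num
    · -- large case : window in the tail
      push_neg at hkle
      have hk6 : 60002 ≤ k := by omega
      have hk6r : (60002:ℝ) ≤ (k:ℝ) := by exact_mod_cast hk6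
      set L : ℝ := (0.0000448*(k:ℝ) - 2.302994)/0.0200064 with hL
      have hLpos : 0 < L := by
        rw [hL]
        have : (0:ℝ) < 0.0000448*(k:ℝ) - 2.302994 := by nlinarith [hk6r]
        positivity
      have hxL : L + n ≤ x := by
        have hnum_low : 0.010048*(k:ℝ) - 2.302994 ≤ Real.log (1/10) + k * (-v) := by
          have h10 : - Real.log 10 ≥ -2.302994 := by linarith [log10_up]
          have hka : 0.010048*(k:ℝ) ≤ (k:ℝ) * (-v) := by
            have := mul_le_mul_of_nonneg_left ha_low (le_of_lt hkpos)
            linarith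
          rw [hlog10]
          linarith
        have hnum_pos : (0:ℝ) < 0.010048*(k:ℝ) - 2.302994 := by nlinarith [hk6r]
        have hdiv : (0.010048*(k:ℝ) - 2.302994)/0.0200064 ≤ x := by
          rw [hx]
          exact div_le_div₀ (le_trans hnum_pos.le hnum_low) hnum_low hs_pos hs_up
        have hnr : (n:ℝ) = (k:ℝ)/2 := by rw [hkr]; ring
        have hLeq : L + (k:ℝ)/2 = (0.010048*(k:ℝ) - 2.302994)/0.0200064 := by
          rw [hL]; field_simp; ring
        rw [hnr]
        linarith [hdiv, hLeq]
      have hterm : ∀ m ∈ M, Real.exp (-((m:ℝ)-(n:ℝ))^2/(k:ℝ)) ≤ 1/(1+L^2/(k:ℝ)) := by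
        intro m hm
        obtain ⟨hx1, _⟩ := hm_bounds m hm
        have hjL : L < (m:ℝ) - n := by linarith [hxL]
        have hsq : L^2 ≤ ((m:ℝ)-n)^2 := by nlinarith [hLpos, hjL]
        calc Real.exp (-((m:ℝ)-(n:ℝ))^2/(k:ℝ)) ≤ Real.exp (-L^2/(k:ℝ)) := by
              apply Real.exp_le_exp.mpr
              rw [div_eq_mul_inv, div_eq_mul_inv]
              apply mul_le_mul_of_nonneg_right ?_ (by positivity)
              linarith [hsq]
          _ = Real.exp (-(L^2/(k:ℝ))) := by rw [neg_div]
          _ ≤ 1/(1+L^2/(k:ℝ)) := exp_neg_le (by positivity)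
      have hcard : (M.card : ℝ) ≤ 120 := by
        have himg2 : M.image (Nat.cast : ℕ → ℤ) ⊆ Finset.Ico (⌊x⌋+1) (⌊x⌋+121) := by
          intro j hj
          obtain ⟨m, hm, rfl⟩ := Finset.mem_image.mp hj
          obtain ⟨hx1, hx2⟩ := hm_bounds m hm
          rw [Finset.mem_Ico]
          constructor
          · have : ⌊x⌋ < (m:ℤ) := Int.floor_lt.mpr (by exact_mod_cast hx1)
            omega
          · have hxy : (m:ℝ) < x + 120 := by
              rw [hyx] at hx2; linarith [hlen]
            have h2 : (m:ℝ) < (⌊x⌋:ℝ) + 121 := by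
              have := Int.sub_one_lt_floor x
              linarith
            have : (m:ℤ) < ⌊x⌋ + 121 := by exact_mod_cast h2
            omega
        have h1 : M.card = (M.image (Nat.cast : ℕ → ℤ)).card :=
          (Finset.card_image_of_injective _ (fun a b hab => by omega)).symm
        have h2 : (M.image (Nat.cast : ℕ → ℤ)).card ≤ (Finset.Ico (⌊x⌋+1) (⌊x⌋+121)).card :=
          Finset.card_le_card himg2
        have h3 : (Finset.Ico (⌊x⌋+1) (⌊x⌋+121)).card = 120 := by
          rw [Int.card_Ico]
          omega
        have : M.card ≤ 120 := by omega
        exact_mod_cast this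
      have hone : (0:ℝ) < 1 + L^2/(k:ℝ) := by positivity
      have hsum120 : (∑ m ∈ M, Real.exp (-((m:ℝ)-(n:ℝ))^2/(k:ℝ))) ≤ 120/(1+L^2/(k:ℝ)) := by
        calc (∑ m ∈ M, Real.exp (-((m:ℝ)-(n:ℝ))^2/(k:ℝ)))
            ≤ ∑ m ∈ M, 1/(1+L^2/(k:ℝ)) := Finset.sum_le_sum hterm
          _ = (M.card : ℝ) * (1/(1+L^2/(k:ℝ))) := by rw [Finset.sum_const, nsmul_eq_mul]
          _ ≤ 120 * (1/(1+L^2/(k:ℝ))) := by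
              apply mul_le_mul_of_nonneg_right hcard (by positivity)
          _ = 120/(1+L^2/(k:ℝ)) := by ring
      have hnum : 120/(1+L^2/(k:ℝ)) < 119.7 := by
        have key0 : 0.3*(k:ℝ)*0.0200064^2 < 119.7*(0.0000448*(k:ℝ) - 2.302994)^2 := by
          nlinarith [hk6r, sq_nonneg ((k:ℝ) - 60002)]
        have hLsq : 119.7 * L^2 = 119.7*(0.0000448*(k:ℝ) - 2.302994)^2/0.0200064^2 := by
          rw [hL, div_pow]; ring
        have key : 0.3*(k:ℝ) < 119.7 * L^2 := by
          rw [hLsq, lt_div_iff₀ (by norm_num : (0:ℝ) < 0.0200064^2)]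
          linarith [key0]
        have h2 : 0.3 < 119.7 * (L^2/(k:ℝ)) := by
          rw [mul_div_assoc']
          rw [lt_div_iff₀ hkpos]
          linarith [key]
        rw [div_lt_iff₀ hone]
        nlinarith [h2]
      linarith [hsum120, hnum]
  -- final assembly
  have hchoosepos : (0:ℝ) < (Nat.choose k n : ℝ) := by
    exact_mod_cast Nat.choose_pos (show n ≤ k by omega)
  have hhalfpos : (0:ℝ) < (1/2:ℝ)^k := by positivity
  have hcb : (Nat.choose k n:ℝ)*(1/2:ℝ)^k ≤ Real.sqrt (2/(Real.pi*(k:ℝ))) := by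
    have hcent := central_binom_sq_le n
    rw [← hk2] at hcent
    have hπn : (0:ℝ) < Real.pi * n := by positivity
    rw [show (2:ℝ)/(Real.pi*(k:ℝ)) = 1/(Real.pi*(n:ℝ)) from by rw [hkr]; field_simp]
    rw [Real.le_sqrt (by positivity : (0:ℝ) ≤ (Nat.choose k n:ℝ)*(1/2:ℝ)^k) (by positivity)]
    have hpow : ((1/2:ℝ)^k)^2 = 1/(16:ℝ)^n := by
      rw [← pow_mul, hk2, show 2*n*2 = 4*n from by ring, pow_mul,
        show ((1/2:ℝ))^4 = (16:ℝ)⁻¹ from by norm_num, inv_pow, one_div]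
    have hsq : ((Nat.choose k n:ℝ)*(1/2:ℝ)^k)^2 = (Nat.choose k n:ℝ)^2 * (1/(16:ℝ)^n) := by
      rw [mul_pow, hpow]
    rw [hsq, mul_one_div, div_le_div_iff₀ (by positivity) hπn]
    nlinarith [hcent]
  calc (∑ m ∈ M, (Nat.choose k m : ℝ)) * (1/2:ℝ)^k
      < (119.7 * (Nat.choose k n:ℝ)) * (1/2:ℝ)^k := by
        have : (∑ m ∈ M, (Nat.choose k m : ℝ)) < 119.7 * (Nat.choose k n:ℝ) := by
          calc (∑ m ∈ M, (Nat.choose k m : ℝ))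
              ≤ (Nat.choose k n : ℝ) * ∑ m ∈ M, Real.exp (-((m:ℝ)-(n:ℝ))^2/(k:ℝ)) := hNle
            _ < (Nat.choose k n : ℝ) * 119.7 := by
                exact mul_lt_mul_of_pos_left hsum_lt hchoosepos
            _ = 119.7 * (Nat.choose k n:ℝ) := by ring
        exact mul_lt_mul_of_pos_right this hhalfpos
    _ = 119.7 * ((Nat.choose k n:ℝ) * (1/2:ℝ)^k) := by ring
    _ ≤ 119.7 * Real.sqrt (2/(Real.pi*(k:ℝ))) := by
        apply mul_le_mul_of_nonneg_left hcb (by norm_num)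
    _ ≤ β * Real.sqrt (2/(Real.pi*(k:ℝ))) := by
        apply mul_le_mul_of_nonneg_right hβ_ge (Real.sqrt_nonneg _)
    _ ≤ β * Real.sqrt (2/(Real.pi*(k:ℝ))) * Real.exp (1/(12*(k:ℝ))) := by
        have h1 : (1:ℝ) ≤ Real.exp (1/(12*(k:ℝ))) := by
          apply Real.one_le_exp
          positivity
        have h2 : (0:ℝ) ≤ β * Real.sqrt (2/(Real.pi*(k:ℝ))) := by
          apply mul_nonneg (by linarith) (Real.sqrt_nonneg _)
        nlinarith [h1, h2]
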